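/- Let 𝒦 = {K₁, …, K_M} be a finite set of row-stochastic N×N real matrices and let p₁, …, p_M be strictly positive reals summing to 1. Set S = Σᵢ pᵢ (Kᵢ ⊗ Kᵢ) and R = ((I−J) ⊗ (I−J)) · S. If there exists a vector v ∈ ℝ^{N²} such that ρ(S − 𝟙_{N²} vᵀ) < 1, where 𝟙_{N²} is the all-ones vector in ℝ^{N²}, then ρ(R) < 1. -/

import Mathlib

open Matrix Kronecker Finset

/-- A square real matrix is row-stochastic if it has nonnegative entries and
each of its rows sums to 1. -/
def RowStochastic {N : ℕ} (K : Matrix (Fin N) (Fin N) ℝ) : Prop :=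
  (∀ i j, 0 ≤ K i j) ∧ ∀ i, ∑ j, K i j = 1

/-- `J = (1/N) 𝟙 𝟙ᵀ`, the `N × N` averaging matrix. -/
noncomputable def Jmat (N : ℕ) : Matrix (Fin N) (Fin N) ℝ :=
  Matrix.of fun _ _ => (N : ℝ)⁻¹

/-- The spectral radius of a real square matrix: the maximum modulus of its
complex eigenvalues. -/
noncomputable def specRad {n : Type*} [Fintype n] [DecidableEq n]
    (A : Matrix n n ℝ) : ℝ :=
  (spectralRadius ℂ (A.map Complex.ofReal)).toReal

lemma spec_QT_subset {n : Type*} [Fintype n] [DecidableEq n]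
    (Q T : Matrix n n ℂ) (hQ : Q * Q = Q) (hQT : Q * T * Q = Q * T) :
    spectrum ℂ (Q * T) ⊆ spectrum ℂ T ∪ {0} := by
  intro z hz
  by_contra hc
  simp only [Set.mem_union, Set.mem_singleton_iff, not_or] at hc
  obtain ⟨h1, h2⟩ := hc
  rw [spectrum.notMem_iff] at h1
  obtain ⟨u, hu⟩ := h1
  set L : Matrix n n ℂ := algebraMap ℂ _ z - T with hL
  have hLW : L * (↑u⁻¹ : Matrix n n ℂ) = 1 := by rw [← hu]; exact u.mul_inv
  set W : Matrix n n ℂ := (↑u⁻¹ : Matrix n n ℂ) with hWdef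
  have halg : (algebraMap ℂ (Matrix n n ℂ)) z = z • 1 := Algebra.algebraMap_eq_smul_one z
  have key : (algebraMap ℂ (Matrix n n ℂ) z - Q * T) * (Q * W * Q + z⁻¹ • (1 - Q)) = 1 := by
    have e0 : Q * T * (1 - Q) = 0 := by rw [mul_sub, mul_one, hQT, sub_self]
    have e1 : Q * L * W * Q = Q * Q := by
      rw [mul_assoc Q L W, hLW, mul_one]
    calc (algebraMap ℂ (Matrix n n ℂ) z - Q * T) * (Q * W * Q + z⁻¹ • (1 - Q))
        = Q * L * W * Q + z⁻¹ • ((algebraMap ℂ (Matrix n n ℂ) z) * (1 - Q)) -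
            z⁻¹ • (Q * T * (1 - Q)) := by
          rw [halg, hL, halg]
          simp only [sub_mul, mul_add, mul_sub, smul_mul_assoc, mul_smul_comm, one_mul, mul_one,
            smul_sub, smul_smul, ← mul_assoc]
          rw [hQT]
          abel
      _ = Q + (1 - Q) := by
          rw [e0, smul_zero, sub_zero, e1, hQ, halg, smul_mul_assoc, one_mul, smul_smul,
            inv_mul_cancel₀ h2, one_smul]
      _ = 1 := by abel
  have : IsUnit (algebraMap ℂ (Matrix n n ℂ) z - Q * T) :=
    (Matrix.isUnit_iff_isUnit_det _).mpr (Matrix.isUnit_det_of_right_inverse key)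
  rw [spectrum.mem_iff] at hz
  exact hz this

theorem stmt8 {N M : ℕ} (hN : 1 ≤ N) (hM : 1 ≤ M)
    (K : Fin M → Matrix (Fin N) (Fin N) ℝ)
    (hK : ∀ k, RowStochastic (K k))
    (p : Fin M → ℝ) (hp : ∀ k, 0 < p k) (hpsum : ∑ k, p k = 1)
    (S R : Matrix (Fin N × Fin N) (Fin N × Fin N) ℝ)
    (hS : S = ∑ k, p k • (K k ⊗ₖ K k))
    (hR : R = ((1 - Jmat N) ⊗ₖ (1 - Jmat N)) * S)
    (h : ∃ v : Fin N × Fin N → ℝ,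
      specRad (S - Matrix.vecMulVec (fun _ => 1) v) < 1) :
    specRad R < 1 := by
  obtain ⟨v, hv⟩ := h
  have hNz : (N : ℝ) ≠ 0 := Nat.cast_ne_zero.mpr (by omega)
  have hJJ : Jmat N * Jmat N = Jmat N := by
    ext i j
    simp only [Jmat, Matrix.mul_apply, Matrix.of_apply, Finset.sum_const, Finset.card_univ,
      Fintype.card_fin, nsmul_eq_mul]
    field_simp
  set P : Matrix (Fin N) (Fin N) ℝ := 1 - Jmat N with hPdef
  have hPJ : P * Jmat N = 0 := by rw [hPdef, sub_mul, one_mul, hJJ, sub_self]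
  have hPP : P * P = P := by
    have expand : (1 - Jmat N) * (1 - Jmat N) = 1 - Jmat N - Jmat N + Jmat N * Jmat N := by
      noncomm_ring
    rw [hPdef, expand, hJJ]; abel
  have hKJ : ∀ k, K k * Jmat N = Jmat N := by
    intro k
    ext i j
    simp only [Jmat, Matrix.mul_apply, Matrix.of_apply]
    rw [← Finset.sum_mul, (hK k).2 i, one_mul]
  have hPKP : ∀ k, P * K k * P = P * K k := by
    intro k
    have e : P * K k * P = P * K k - P * (K k * Jmat N) := by
      rw [hPdef]; rw [mul_sub, mul_one, mul_assoc]
    rw [e, hKJ k, hPJ, sub_zero]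
  set Q : Matrix (Fin N × Fin N) (Fin N × Fin N) ℝ := P ⊗ₖ P with hQdef
  have hQQ : Q * Q = Q := by rw [hQdef, ← Matrix.mul_kronecker_mul, hPP]
  have hQK : ∀ k, Q * (K k ⊗ₖ K k) * Q = Q * (K k ⊗ₖ K k) := by
    intro k
    rw [hQdef, ← Matrix.mul_kronecker_mul, ← Matrix.mul_kronecker_mul, hPKP]
  have hQSQ : Q * S * Q = Q * S := by
    rw [hS, Finset.mul_sum, Finset.sum_mul]
    refine Finset.sum_congr rfl fun k _ => ?_
    rw [Matrix.mul_smul, Matrix.smul_mul, hQK k]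
  have hProw : ∀ i : Fin N, ∑ j, P i j = 0 := by
    intro i
    rw [hPdef]
    simp only [Matrix.sub_apply, Matrix.one_apply, Jmat, Matrix.of_apply,
      Finset.sum_sub_distrib, Finset.sum_ite_eq, Finset.mem_univ, if_true,
      Finset.sum_const, Finset.card_univ, Fintype.card_fin, nsmul_eq_mul]
    field_simp
    norm_num
  have hQv : Q * Matrix.vecMulVec (fun _ => (1 : ℝ)) v = 0 := by
    ext a b
    simp only [Matrix.mul_apply, Matrix.vecMulVec_apply, Matrix.zero_apply, one_mul]
    rw [← Finset.sum_mul]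
    have hrow : ∑ c, Q a c = 0 := by
      rw [hQdef]
      rw [show (univ : Finset (Fin N × Fin N)) = univ ×ˢ univ from rfl]
      rw [Finset.sum_product]
      simp only [Matrix.kroneckerMap_apply]
      rw [← Finset.sum_mul_sum]
      rw [hProw a.1, zero_mul]
    rw [hrow, zero_mul]
  set T : Matrix (Fin N × Fin N) (Fin N × Fin N) ℝ :=
    S - Matrix.vecMulVec (fun _ => (1 : ℝ)) v with hT
  have hQT' : Q * T = Q * S := by rw [hT, mul_sub, hQv, sub_zero]
  have hRT : R = Q * T := by rw [hR, hQT']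
  have hQTQ : Q * T * Q = Q * T := by rw [hQT', hQSQ, ← hQT']
  -- move to ℂ
  set f : Matrix (Fin N × Fin N) (Fin N × Fin N) ℝ →+* Matrix (Fin N × Fin N) (Fin N × Fin N) ℂ :=
    Complex.ofRealHom.mapMatrix with hf
  have hsub : spectrum ℂ (f R) ⊆ spectrum ℂ (f T) ∪ {0} := by
    have h1 : f Q * f Q = f Q := by simpa only [_root_.map_mul] using congrArg f hQQ
    have h2 : f Q * f T * f Q = f Q * f T := by simpa only [_root_.map_mul] using congrArg f hQTQ
    have h3 : f R = f Q * f T := by simpa only [_root_.map_mul] using congrArg f hRT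
    rw [h3]
    exact spec_QT_subset _ _ h1 h2
  have hle : spectralRadius ℂ (f R) ≤ spectralRadius ℂ (f T) := by
    rw [spectralRadius, spectralRadius]
    refine iSup₂_le fun k hk => ?_
    rcases hsub hk with hk' | hk'
    · exact le_iSup₂ (f := fun k (_ : k ∈ spectrum ℂ (f T)) => (‖k‖₊ : ENNReal)) k hk'
    · simp only [Set.mem_singleton_iff] at hk'
      subst hk'
      simp
  have hfin : (spectrum ℂ (f T)).Finite := Matrix.finite_spectrum _
  have hne : spectralRadius ℂ (f T) ≠ ⊤ := by
    have hC : ∀ k ∈ spectrum ℂ (f T),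
        (‖k‖₊ : ENNReal) ≤ (hfin.toFinset.sup fun k => ‖k‖₊ : NNReal) := by
      intro k hk
      exact_mod_cast ENNReal.coe_le_coe.mpr
        (Finset.le_sup (f := fun k => ‖k‖₊) (hfin.mem_toFinset.mpr hk))
    have : spectralRadius ℂ (f T) ≤ ((hfin.toFinset.sup fun k => ‖k‖₊ : NNReal) : ENNReal) := by
      rw [spectralRadius]; exact iSup₂_le hC
    exact ne_top_of_le_ne_top ENNReal.coe_ne_top this
  have hRmap : R.map Complex.ofReal = f R := rfl
  have hTmap : T.map Complex.ofReal = f T := rfl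
  calc specRad R = (spectralRadius ℂ (f R)).toReal := by rw [specRad, hRmap]
    _ ≤ (spectralRadius ℂ (f T)).toReal := ENNReal.toReal_mono hne hle
    _ < 1 := by rw [specRad, hTmap] at hv; exact hv
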